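/- (Substitution Lemma) Let α_1,…,α_t ∈ F_2^k be linearly independent vectors over F_2 satisfying f_{α_i}(n) = Ω(n^{c_1}) for each i ∈ [t], for some constant c_1 > 0. Suppose β_1, β_2 ∈ F_2^k satisfy β_1 − β_2 ∈ ⟨α_1,…,α_t⟩. If f_{β_1}(n) ~ c·n^{c_2} for some constants 0 < c_2 < c_1 and c > 0, then f_{β_2}(n) ~ c·n^{c_2}. -/

import Mathlib

open Filter

/-- A family `F` of subsets of `[n]` (modeled as `Fin n`) is `α`-intersecting modulo 2 for a
vector `α ∈ F_2^k` if for each `ℓ ∈ [k]`, any `ℓ` pairwise distinct members of `F`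
have an intersection of cardinality congruent to `a_ℓ` modulo 2.
Here `α ⟨ℓ-1,_⟩` denotes the coordinate `a_ℓ` (0-based indexing of a 1-based vector). -/
def IsIntersecting (k n : ℕ) (α : Fin k → ZMod 2) (F : Finset (Finset (Fin n))) : Prop :=
  ∀ (ℓ : Fin k) (S : Finset (Finset (Fin n))), S ⊆ F → S.card = ℓ.1 + 1 →
    ((S.inf id).card : ZMod 2) = α ℓ

/-- `fMax k n α` is the maximum size of an `α`-intersecting (mod 2) family of subsets of `[n]`. -/
noncomputable def fMax (k n : ℕ) (α : Fin k → ZMod 2) : ℕ :=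
  sSup {m | ∃ F : Finset (Finset (Fin n)), IsIntersecting k n α F ∧ F.card = m}


lemma fMax_bddAbove (k n : ℕ) (α : Fin k → ZMod 2) :
    BddAbove {m | ∃ F : Finset (Finset (Fin n)), IsIntersecting k n α F ∧ F.card = m} := by
  refine ⟨Fintype.card (Finset (Fin n)), ?_⟩
  rintro m ⟨F, _, rfl⟩
  exact Finset.card_le_univ F

lemma exists_fMax (k n : ℕ) (α : Fin k → ZMod 2) :
    ∃ F : Finset (Finset (Fin n)), IsIntersecting k n α F ∧ F.card = fMax k n α := by
  have h0 : IsIntersecting k n α ∅ := by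
    intro ℓ S hS hcard
    rw [Finset.subset_empty.mp hS] at hcard
    simp at hcard
  have hmem : (0:ℕ) ∈ {m | ∃ F : Finset (Finset (Fin n)), IsIntersecting k n α F ∧ F.card = m} :=
    ⟨∅, h0, rfl⟩
  exact Nat.sSup_mem ⟨0, hmem⟩ (fMax_bddAbove k n α)

lemma le_fMax {k n : ℕ} {α : Fin k → ZMod 2} {F : Finset (Finset (Fin n))}
    (h : IsIntersecting k n α F) : F.card ≤ fMax k n α :=
  le_csSup (fMax_bddAbove k n α) ⟨F, h, rfl⟩

lemma fMax_add_le (k n m : ℕ) (β β' : Fin k → ZMod 2) :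
    min (fMax k n β) (fMax k m β') ≤ fMax k (n + m) (β + β') := by
  classical
  obtain ⟨F, hF, hFc⟩ := exists_fMax k n β
  obtain ⟨G, hG, hGc⟩ := exists_fMax k m β'
  set N := min (fMax k n β) (fMax k m β') with hN
  obtain ⟨F₀, hF₀sub, hF₀c⟩ := Finset.exists_subset_card_eq
    (show N ≤ F.card by rw [hFc]; exact min_le_left _ _)
  obtain ⟨G₀, hG₀sub, hG₀c⟩ := Finset.exists_subset_card_eq
    (show N ≤ G.card by rw [hGc]; exact min_le_right _ _)
  have e : {x // x ∈ F₀} ≃ {x // x ∈ G₀} := Finset.equivOfCardEq (hF₀c.trans hG₀c.symm)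
  set l : Fin n ↪ Fin (n + m) := Fin.castAddEmb m with hl
  set r : Fin m ↪ Fin (n + m) := Fin.natAddEmb n with hr
  have hlval : ∀ y : Fin n, (l y).1 = y.1 := fun _ => rfl
  have hrval : ∀ z : Fin m, (r z).1 = n + z.1 := fun _ => rfl
  set ψ : {x // x ∈ F₀} → Finset (Fin (n + m)) :=
    fun a => a.1.map l ∪ ((e a).1 : Finset (Fin m)).map r with hψ
  have memψ_left : ∀ (a : {x // x ∈ F₀}) (y : Fin n), l y ∈ ψ a ↔ y ∈ a.1 := by
    intro a y
    simp only [hψ, Finset.mem_union, Finset.mem_map]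
    constructor
    · rintro (⟨z, hz, hzy⟩ | ⟨z, hz, hzy⟩)
      · rwa [l.injective hzy] at hz
      · exfalso; have := congrArg Fin.val hzy; rw [hrval, hlval] at this
        have := y.2; omega
    · intro h; exact Or.inl ⟨y, h, rfl⟩
  have memψ_right : ∀ (a : {x // x ∈ F₀}) (z : Fin m),
      r z ∈ ψ a ↔ z ∈ ((e a).1 : Finset (Fin m)) := by
    intro a z
    simp only [hψ, Finset.mem_union, Finset.mem_map]
    constructor
    · rintro (⟨y, hy, hyz⟩ | ⟨y, hy, hyz⟩)
      · exfalso; have := congrArg Fin.val hyz; rw [hrval, hlval] at this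
        have := y.2; omega
      · rwa [r.injective hyz] at hy
    · intro h; exact Or.inr ⟨z, h, rfl⟩
  have ψinj : Function.Injective ψ := by
    intro a b hab
    have : a.1 = b.1 := by
      ext y
      rw [← memψ_left a y, ← memψ_left b y, hab]
    exact Subtype.ext this
  set H : Finset (Finset (Fin (n + m))) := Finset.univ.image ψ with hH
  have hHcard : H.card = N := by
    rw [hH, Finset.card_image_of_injective _ ψinj, Finset.card_univ, Fintype.card_coe, hF₀c]
  have hHint : IsIntersecting k (n + m) (β + β') H := by
    intro ℓ S hS hcard
    obtain ⟨S₀, -, rfl⟩ := Finset.subset_image_iff.mp hS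
    have hS₀c : S₀.card = ℓ.1 + 1 := by
      rwa [Finset.card_image_of_injective _ ψinj] at hcard
    set T₁ : Finset (Finset (Fin n)) := S₀.image (fun a => a.1) with hT₁
    set T₂ : Finset (Finset (Fin m)) := S₀.image (fun a => ((e a).1 : Finset (Fin m))) with hT₂
    have hT₁sub : T₁ ⊆ F := by
      intro s hs
      obtain ⟨a, -, rfl⟩ := Finset.mem_image.mp hs
      exact hF₀sub a.2
    have hT₂sub : T₂ ⊆ G := by
      intro s hs
      obtain ⟨a, -, rfl⟩ := Finset.mem_image.mp hs
      exact hG₀sub (e a).2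
    have hT₁c : T₁.card = ℓ.1 + 1 := by
      rw [hT₁, Finset.card_image_of_injective _ Subtype.val_injective]; exact hS₀c
    have hT₂c : T₂.card = ℓ.1 + 1 := by
      rw [hT₂, Finset.card_image_of_injective _
        (show Function.Injective (fun a : {x // x ∈ F₀} => ((e a).1 : Finset (Fin m))) from
          fun a b h => e.injective (Subtype.ext h))]
      exact hS₀c
    have key : (Finset.image ψ S₀).inf id = (T₁.inf id).map l ∪ (T₂.inf id).map r := by
      rw [Finset.inf_image, Function.id_comp]
      ext x
      simp only [Finset.mem_union, Finset.mem_map]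
      constructor
      · intro hx
        rw [Finset.mem_inf] at hx
        by_cases hxn : x.1 < n
        · left
          refine ⟨⟨x.1, hxn⟩, ?_, Fin.ext rfl⟩
          rw [Finset.mem_inf]
          intro s hs
          obtain ⟨a, ha, rfl⟩ := Finset.mem_image.mp hs
          have h2 := hx a ha
          have hx' : l ⟨x.1, hxn⟩ = x := Fin.ext rfl
          rw [← hx', memψ_left] at h2
          exact h2
        · right
          have hxn' : x.1 - n < m := by have := x.2; omega
          have hx' : r ⟨x.1 - n, hxn'⟩ = x := Fin.ext (by rw [hrval]; simp; omega)
          refine ⟨⟨x.1 - n, hxn'⟩, ?_, hx'⟩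
          rw [Finset.mem_inf]
          intro s hs
          obtain ⟨a, ha, rfl⟩ := Finset.mem_image.mp hs
          have h2 := hx a ha
          rw [← hx', memψ_right] at h2
          exact h2
      · rintro (⟨y, hy, rfl⟩ | ⟨z, hz, rfl⟩) <;> rw [Finset.mem_inf] <;> intro a ha
        · rw [memψ_left]
          rw [Finset.mem_inf] at hy
          exact hy a.1 (Finset.mem_image.mpr ⟨a, ha, rfl⟩)
        · rw [memψ_right]
          rw [Finset.mem_inf] at hz
          exact hz _ (Finset.mem_image.mpr ⟨a, ha, rfl⟩)
    have hdisj : Disjoint ((T₁.inf id).map l) ((T₂.inf id).map r) := by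
      rw [Finset.disjoint_left]
      rintro x hx hx'
      obtain ⟨y, -, rfl⟩ := Finset.mem_map.mp hx
      obtain ⟨z, -, hzy⟩ := Finset.mem_map.mp hx'
      have := congrArg Fin.val hzy
      rw [hrval, hlval] at this
      have := y.2; omega
    rw [key, Finset.card_union_of_disjoint hdisj, Finset.card_map, Finset.card_map]
    push_cast
    rw [hF ℓ T₁ hT₁sub hT₁c, hG ℓ T₂ hT₂sub hT₂c]
    rfl
  calc N = H.card := hHcard.symm
    _ ≤ _ := le_fMax hHint

section
variable (g : ℕ → ℝ) (c c2 : ℝ)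

lemma tendsto_iff_bounds (hc : 0 < c) :
    Tendsto (fun n : ℕ => g n / (c * (n : ℝ) ^ c2)) atTop (nhds 1) ↔
    ∀ ε : ℝ, 0 < ε → ∀ᶠ n : ℕ in atTop,
      (1 - ε) * (c * (n : ℝ) ^ c2) ≤ g n ∧ g n ≤ (1 + ε) * (c * (n : ℝ) ^ c2) := by
  constructor
  · intro h ε hε
    have h2 := (Metric.tendsto_nhds.mp h) ε hε
    filter_upwards [h2, eventually_ge_atTop 1] with n hn hn1
    have hD : 0 < c * (n : ℝ) ^ c2 := by
      have : (0:ℝ) < (n:ℝ) := by exact_mod_cast hn1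
      positivity
    rw [Real.dist_eq, abs_lt] at hn
    have hgn : g n = (g n / (c * (n : ℝ) ^ c2)) * (c * (n : ℝ) ^ c2) := by
      field_simp
    constructor
    · rw [hgn]; apply mul_le_mul_of_nonneg_right (by linarith) hD.le
    · rw [hgn]; apply mul_le_mul_of_nonneg_right (by linarith) hD.le
  · intro h
    rw [Metric.tendsto_nhds]
    intro ε hε
    filter_upwards [h (ε/2) (by linarith), eventually_ge_atTop 1] with n hn hn1
    have hD : 0 < c * (n : ℝ) ^ c2 := by
      have : (0:ℝ) < (n:ℝ) := by exact_mod_cast hn1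
      positivity
    rw [Real.dist_eq, abs_lt]
    have h1 : 1 - ε/2 ≤ g n / (c * (n : ℝ) ^ c2) := by
      rw [le_div_iff₀ hD]; linarith [hn.1]
    have h2 : g n / (c * (n : ℝ) ^ c2) ≤ 1 + ε/2 := by
      rw [div_le_iff₀ hD]; linarith [hn.2]
    constructor <;> linarith
end

section helpers
variable {θ : ℝ}

lemma tendsto_m_atTop (hθ : 0 < θ) :
    Tendsto (fun n : ℕ => ⌈(n : ℝ) ^ θ⌉₊) atTop atTop := by
  rw [tendsto_atTop]
  intro b
  have h : Tendsto (fun n : ℕ => (n : ℝ) ^ θ) atTop atTop :=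
    (tendsto_rpow_atTop hθ).comp tendsto_natCast_atTop_atTop
  filter_upwards [h.eventually_ge_atTop (b : ℝ)] with n hn
  exact_mod_cast hn.trans (Nat.le_ceil _)

lemma tendsto_ratio_zero (hθ : 0 < θ) (hθ1 : θ < 1) :
    Tendsto (fun n : ℕ => (⌈(n : ℝ) ^ θ⌉₊ : ℝ) / (n : ℝ)) atTop (nhds 0) := by
  have hupper : Tendsto (fun n : ℕ => (n : ℝ) ^ (θ - 1) + ((n : ℝ))⁻¹) atTop (nhds 0) := by
    have h1 : Tendsto (fun n : ℕ => (n : ℝ) ^ (θ - 1)) atTop (nhds 0) := by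
      have := tendsto_rpow_neg_atTop (show 0 < 1 - θ by linarith)
      have h2 := this.comp tendsto_natCast_atTop_atTop (α := ℕ)
      convert h2 using 2 with n
      norm_num
    have h2 : Tendsto (fun n : ℕ => ((n : ℝ))⁻¹) atTop (nhds 0) :=
      tendsto_inv_atTop_zero.comp tendsto_natCast_atTop_atTop
    simpa using h1.add h2
  apply tendsto_of_tendsto_of_tendsto_of_le_of_le' tendsto_const_nhds hupper
  · filter_upwards [eventually_ge_atTop 1] with n hn
    positivity
  · filter_upwards [eventually_ge_atTop 1] with n hn
    have hn0 : (0:ℝ) < (n:ℝ) := by exact_mod_cast hn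
    have hceil : (⌈(n : ℝ) ^ θ⌉₊ : ℝ) ≤ (n : ℝ) ^ θ + 1 := by
      have := Nat.ceil_lt_add_one (by positivity : (0:ℝ) ≤ (n : ℝ) ^ θ)
      linarith
    rw [div_le_iff₀ hn0, add_mul]
    have h4 : (n : ℝ) ^ (θ - 1) * n = (n : ℝ) ^ θ := by
      rw [← Real.rpow_add_one (ne_of_gt hn0)]
      ring_nf
    have h3 : ((n:ℝ))⁻¹ * n = 1 := inv_mul_cancel₀ (ne_of_gt hn0)
    rw [h4, h3]
    exact hceil
end helpers

set_option maxHeartbeats 1000000 in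
lemma main_step (k : ℕ) (α β : Fin k → ZMod 2) (ca c1 c c2 : ℝ)
    (hca : 0 < ca) (hc1 : 0 < c1) (hc : 0 < c) (hc2 : 0 < c2) (hc21 : c2 < c1)
    (hα : ∀ᶠ n : ℕ in atTop, ca * (n : ℝ) ^ c1 ≤ (fMax k n α : ℝ))
    (hβ : Tendsto (fun n : ℕ => (fMax k n β : ℝ) / (c * (n : ℝ) ^ c2)) atTop (nhds 1)) :
    Tendsto (fun n : ℕ => (fMax k n (β + α) : ℝ) / (c * (n : ℝ) ^ c2)) atTop (nhds 1) := by
  set θ : ℝ := (c2 / c1 + 1) / 2 with hθdef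
  have hcc : 0 < c2 / c1 := div_pos hc2 hc1
  have hθ0 : 0 < θ := by rw [hθdef]; linarith
  have hθ1 : θ < 1 := by
    rw [hθdef]
    have : c2 / c1 < 1 := (div_lt_one hc1).mpr hc21
    linarith
  have hθc : c2 < θ * c1 := by
    have h : θ * c1 = (c2 + c1) / 2 := by rw [hθdef]; field_simp
    rw [h]; linarith
  set m : ℕ → ℕ := fun n => ⌈(n : ℝ) ^ θ⌉₊ with hm
  have hmT : Tendsto m atTop atTop := tendsto_m_atTop hθ0
  have hratio : Tendsto (fun n : ℕ => (m n : ℝ) / n) atTop (nhds 0) :=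
    tendsto_ratio_zero hθ0 hθ1
  have hmle : ∀ᶠ n : ℕ in atTop, m n ≤ n ∧ 1 ≤ n := by
    filter_upwards [hratio.eventually_lt_const (by norm_num : (0:ℝ) < 1/2),
      eventually_ge_atTop 1] with n h1 h2
    refine ⟨?_, h2⟩
    have hn0 : (0:ℝ) < n := by exact_mod_cast h2
    rw [div_lt_iff₀ hn0] at h1
    have : (m n : ℝ) ≤ (n : ℝ) := by nlinarith
    exact_mod_cast this
  set n₀ : ℕ → ℕ := fun n => n - m n with hn₀
  have hn₀T : Tendsto n₀ atTop atTop := by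
    rw [tendsto_atTop]
    intro b
    filter_upwards [hratio.eventually_lt_const (by norm_num : (0:ℝ) < 1/2),
      eventually_ge_atTop (2 * b + 2)] with n h1 h2
    have hn0 : (0:ℝ) < n := by
      have : 1 ≤ n := by omega
      exact_mod_cast this
    rw [div_lt_iff₀ hn0] at h1
    have hb : (2 * b + 2 : ℝ) ≤ n := by exact_mod_cast h2
    have : (m n + b : ℝ) < n := by nlinarith
    have h3 : m n + b ≤ n := by exact_mod_cast this.le
    simp only [hn₀]
    omega
  have hmlen : ∀ᶠ n : ℕ in atTop, n₀ n + m n = n := by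
    filter_upwards [hmle] with n h
    simp only [hn₀]
    omega
  have hn₀ratio : Tendsto (fun n : ℕ => ((n₀ n : ℝ)) / n) atTop (nhds 1) := by
    have hev : (fun n : ℕ => 1 - (m n : ℝ) / n) =ᶠ[atTop] fun n => ((n₀ n : ℝ)) / n := by
      filter_upwards [hmle] with n h
      have hn0 : (0:ℝ) < n := by exact_mod_cast h.2
      simp only [hn₀]
      rw [Nat.cast_sub h.1, sub_div, div_self (ne_of_gt hn0)]
    have := tendsto_const_nhds (x := (1:ℝ)) (f := atTop (α := ℕ)) |>.sub hratio
    rw [sub_zero] at this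
    exact this.congr' hev
  have hc2ratio : Tendsto (fun n : ℕ => ((n₀ n : ℝ)) ^ c2 / ((n : ℝ)) ^ c2) atTop (nhds 1) := by
    have h := hn₀ratio.rpow_const (Or.inr hc2.le)
    rw [Real.one_rpow] at h
    refine h.congr fun n => ?_
    rw [Real.div_rpow (Nat.cast_nonneg _) (Nat.cast_nonneg _)]
  have hplusratio : Tendsto (fun n : ℕ => (((n + m n : ℕ) : ℝ)) ^ c2 / ((n : ℝ)) ^ c2)
      atTop (nhds 1) := by
    have h0 : Tendsto (fun n : ℕ => (((n + m n : ℕ) : ℝ)) / n) atTop (nhds 1) := by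
      have := tendsto_const_nhds (x := (1:ℝ)) (f := atTop (α := ℕ)) |>.add hratio
      rw [add_zero] at this
      refine this.congr' ?_
      filter_upwards [eventually_ge_atTop 1] with n h
      have hn0 : (0:ℝ) < n := by exact_mod_cast h
      push_cast
      rw [add_div, div_self (ne_of_gt hn0)]
    have h := h0.rpow_const (Or.inr hc2.le)
    rw [Real.one_rpow] at h
    refine h.congr fun n => ?_
    rw [Real.div_rpow (Nat.cast_nonneg _) (Nat.cast_nonneg _)]
  have hplusT : Tendsto (fun n : ℕ => n + m n) atTop atTop :=
    tendsto_atTop_mono (fun n => Nat.le_add_right n (m n)) tendsto_id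
  have evα : ∀ K : ℝ, ∀ᶠ n : ℕ in atTop, K * (c * (n : ℝ) ^ c2) ≤ (fMax k (m n) α : ℝ) := by
    intro K
    have hαm : ∀ᶠ n : ℕ in atTop, ca * ((m n : ℝ)) ^ c1 ≤ (fMax k (m n) α : ℝ) :=
      hmT.eventually hα
    have hgrow : Tendsto (fun n : ℕ => (ca / c) * ((n : ℝ)) ^ (θ * c1 - c2)) atTop atTop :=
      ((tendsto_rpow_atTop (by linarith)).comp tendsto_natCast_atTop_atTop).const_mul_atTop
        (div_pos hca hc)
    filter_upwards [hαm, hgrow.eventually_ge_atTop K, eventually_ge_atTop 1] with n h1 h2 h3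
    have hn0 : (0:ℝ) < n := by exact_mod_cast h3
    have hmn : (n : ℝ) ^ θ ≤ (m n : ℝ) := Nat.le_ceil _
    have step1 : ca * (n : ℝ) ^ (θ * c1) ≤ ca * ((m n : ℝ)) ^ c1 := by
      rw [Real.rpow_mul hn0.le]
      exact mul_le_mul_of_nonneg_left (Real.rpow_le_rpow (by positivity) hmn hc1.le) hca.le
    have hD : (0:ℝ) < c * (n : ℝ) ^ c2 := by positivity
    have step2 : K * (c * (n : ℝ) ^ c2) ≤ ca * (n : ℝ) ^ (θ * c1) := by
      have h4 := mul_le_mul_of_nonneg_right h2 hD.le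
      calc K * (c * (n : ℝ) ^ c2) ≤ (ca / c) * (n : ℝ) ^ (θ * c1 - c2) * (c * (n : ℝ) ^ c2) := h4
        _ = ca * (n : ℝ) ^ (θ * c1) := by
            rw [Real.rpow_sub hn0]
            field_simp
    linarith
  rw [tendsto_iff_bounds _ c c2 hc] at hβ ⊢
  suffices H : ∀ ε : ℝ, 0 < ε → ε ≤ 1 → ∀ᶠ n : ℕ in atTop,
      (1 - ε) * (c * (n : ℝ) ^ c2) ≤ (fMax k n (β + α) : ℝ) ∧
      (fMax k n (β + α) : ℝ) ≤ (1 + ε) * (c * (n : ℝ) ^ c2) by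
    intro ε hε
    rcases le_or_gt ε 1 with h | h
    · exact H ε hε h
    · filter_upwards [H 1 one_pos le_rfl, eventually_ge_atTop 1] with n hn hn1
      have hn0 : (0:ℝ) < n := by exact_mod_cast hn1
      have hD : (0:ℝ) < c * (n : ℝ) ^ c2 := by positivity
      obtain ⟨hl, hu⟩ := hn
      constructor
      · nlinarith
      · nlinarith
  intro ε hε hε1
  -- lower bound
  have hAl : ∀ᶠ n : ℕ in atTop,
      (1 - ε/3) * (c * ((n₀ n : ℝ)) ^ c2) ≤ (fMax k (n₀ n) β : ℝ) := by
    filter_upwards [hn₀T.eventually (hβ (ε/3) (by linarith))] with n hn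
    exact hn.1
  have hAr : ∀ᶠ n : ℕ in atTop, (1 - ε/3) * ((n : ℝ)) ^ c2 ≤ ((n₀ n : ℝ)) ^ c2 := by
    filter_upwards [hc2ratio.eventually_const_lt (by linarith : 1 - ε/3 < 1),
      eventually_ge_atTop 1] with n hn hn1
    have hn0 : (0:ℝ) < n := by exact_mod_cast hn1
    have hD : (0:ℝ) < ((n : ℝ)) ^ c2 := by positivity
    rw [lt_div_iff₀ hD] at hn
    linarith
  have evLower : ∀ᶠ n : ℕ in atTop,
      (1 - ε) * (c * (n : ℝ) ^ c2) ≤ (fMax k n (β + α) : ℝ) := by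
    filter_upwards [hAl, hAr, evα 1, hmlen, eventually_ge_atTop 1] with n h1 h2 h3 h4 h5
    have hn0 : (0:ℝ) < n := by exact_mod_cast h5
    have hD : (0:ℝ) < c * (n : ℝ) ^ c2 := by positivity
    have key : min (fMax k (n₀ n) β) (fMax k (m n) α) ≤ fMax k n (β + α) := by
      have := fMax_add_le k (n₀ n) (m n) β α
      rwa [h4] at this
    have keyR : ((min (fMax k (n₀ n) β) (fMax k (m n) α) : ℕ) : ℝ) ≤ (fMax k n (β + α) : ℝ) :=
      Nat.cast_le.mpr key
    rw [Nat.cast_min] at keyR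
    have comp1 : (1 - ε) * (c * (n : ℝ) ^ c2) ≤ (fMax k (n₀ n) β : ℝ) := by
      have hnn : (0:ℝ) ≤ 1 - ε/3 := by linarith
      have hstep : (1 - ε/3) * (c * ((n₀ n : ℝ)) ^ c2) ≥ (1 - ε/3) * (c * ((1 - ε/3) * ((n : ℝ)) ^ c2)) := by
        apply mul_le_mul_of_nonneg_left _ hnn
        apply mul_le_mul_of_nonneg_left h2 hc.le
      have e1 : (1 - ε/3) * (c * ((1 - ε/3) * ((n : ℝ)) ^ c2)) = (1 - ε/3)^2 * (c * ((n : ℝ)) ^ c2) := by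
        ring
      have e2 : (1 - ε) * (c * ((n : ℝ)) ^ c2) ≤ (1 - ε/3)^2 * (c * ((n : ℝ)) ^ c2) :=
        mul_le_mul_of_nonneg_right (by nlinarith) hD.le
      linarith
    have comp2 : (1 - ε) * (c * (n : ℝ) ^ c2) ≤ (fMax k (m n) α : ℝ) := by
      have : (1 - ε) * (c * (n : ℝ) ^ c2) ≤ 1 * (c * (n : ℝ) ^ c2) :=
        mul_le_mul_of_nonneg_right (by linarith) hD.le
      linarith
    calc (1 - ε) * (c * (n : ℝ) ^ c2) ≤ min ((fMax k (n₀ n) β : ℝ)) ((fMax k (m n) α : ℝ)) :=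
          le_min comp1 comp2
      _ ≤ _ := keyR
  -- upper bound
  have heq : β + α + α = β := by
    funext x
    show β x + α x + α x = β x
    rw [add_assoc, CharTwo.add_self_eq_zero, add_zero]
  have hBu : ∀ᶠ n : ℕ in atTop,
      (fMax k (n + m n) β : ℝ) ≤ (1 + ε/3) * (c * (((n + m n : ℕ)) : ℝ) ^ c2) := by
    filter_upwards [hplusT.eventually (hβ (ε/3) (by linarith))] with n hn
    exact hn.2
  have hBr : ∀ᶠ n : ℕ in atTop, (((n + m n : ℕ)) : ℝ) ^ c2 ≤ (1 + ε/3) * ((n : ℝ)) ^ c2 := by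
    filter_upwards [hplusratio.eventually_lt_const (by linarith : (1:ℝ) < 1 + ε/3),
      eventually_ge_atTop 1] with n hn hn1
    have hn0 : (0:ℝ) < n := by exact_mod_cast hn1
    have hD : (0:ℝ) < ((n : ℝ)) ^ c2 := by positivity
    rw [div_lt_iff₀ hD] at hn
    linarith
  have evUpper : ∀ᶠ n : ℕ in atTop,
      (fMax k n (β + α) : ℝ) ≤ (1 + ε) * (c * (n : ℝ) ^ c2) := by
    filter_upwards [hBu, hBr, evα 3, eventually_ge_atTop 1] with n h1 h2 h3 h5
    have hn0 : (0:ℝ) < n := by exact_mod_cast h5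
    have hD : (0:ℝ) < c * (n : ℝ) ^ c2 := by positivity
    have key2 : min (fMax k n (β + α)) (fMax k (m n) α) ≤ fMax k (n + m n) β := by
      have := fMax_add_le k n (m n) (β + α) α
      rwa [heq] at this
    have keyR : min ((fMax k n (β + α) : ℝ)) ((fMax k (m n) α : ℝ)) ≤ (fMax k (n + m n) β : ℝ) := by
      have h6 := (Nat.cast_le (α := ℝ)).mpr key2
      rwa [Nat.cast_min] at h6
    have hbound : (fMax k (n + m n) β : ℝ) ≤ (1 + ε) * (c * (n : ℝ) ^ c2) := by
      have hpow : (0:ℝ) ≤ ((n : ℝ)) ^ c2 := by positivity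
      have step : (1 + ε/3) * (c * (((n + m n : ℕ)) : ℝ) ^ c2) ≤
          (1 + ε/3) * (c * ((1 + ε/3) * ((n : ℝ)) ^ c2)) := by
        apply mul_le_mul_of_nonneg_left _ (by linarith)
        apply mul_le_mul_of_nonneg_left h2 hc.le
      have e1 : (1 + ε/3) * (c * ((1 + ε/3) * ((n : ℝ)) ^ c2)) = (1 + ε/3)^2 * (c * ((n : ℝ)) ^ c2) := by
        ring
      have e2 : (1 + ε/3)^2 * (c * ((n : ℝ)) ^ c2) ≤ (1 + ε) * (c * ((n : ℝ)) ^ c2) :=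
        mul_le_mul_of_nonneg_right (by nlinarith) hD.le
      linarith
    have hαbig : (1 + ε) * (c * (n : ℝ) ^ c2) < (fMax k (m n) α : ℝ) := by
      have : (1 + ε) * (c * (n : ℝ) ^ c2) < 3 * (c * (n : ℝ) ^ c2) := by
        apply mul_lt_mul_of_pos_right (by linarith) hD
      linarith
    rcases min_cases ((fMax k n (β + α) : ℝ)) ((fMax k (m n) α : ℝ)) with ⟨hm1, _⟩ | ⟨hm1, _⟩
    · rw [hm1] at keyR
      linarith
    · rw [hm1] at keyR
      linarith
  exact evLower.and evUpper

theorem stmt9 (k t : ℕ) (A : Fin t → Fin k → ZMod 2)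
    (hA : LinearIndependent (ZMod 2) A) (c1 : ℝ) (hc1 : 0 < c1)
    (hbig : ∀ i : Fin t, ∃ ci : ℝ, 0 < ci ∧ ∀ᶠ n : ℕ in atTop,
      ci * (n : ℝ) ^ c1 ≤ (fMax k n (A i) : ℝ))
    (β₁ β₂ : Fin k → ZMod 2) (hβ : β₁ - β₂ ∈ Submodule.span (ZMod 2) (Set.range A))
    (c c2 : ℝ) (hc : 0 < c) (hc2 : 0 < c2) (hc21 : c2 < c1)
    (h1 : Tendsto (fun n : ℕ => (fMax k n β₁ : ℝ) / (c * (n : ℝ) ^ c2)) atTop (nhds 1)) :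
    Tendsto (fun n : ℕ => (fMax k n β₂ : ℝ) / (c * (n : ℝ) ^ c2)) atTop (nhds 1) := by
  
  have key : ∀ γ, γ ∈ Submodule.span (ZMod 2) (Set.range A) →
      ∀ β : Fin k → ZMod 2,
        Tendsto (fun n : ℕ => (fMax k n β : ℝ) / (c * (n : ℝ) ^ c2)) atTop (nhds 1) →
        Tendsto (fun n : ℕ => (fMax k n (β + γ) : ℝ) / (c * (n : ℝ) ^ c2)) atTop (nhds 1) := by
    intro γ hγ
    induction hγ using Submodule.span_induction with
    | mem x hx =>
      obtain ⟨i, rfl⟩ := hx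
      intro β hb
      obtain ⟨ci, hci, hbi⟩ := hbig i
      exact main_step k (A i) β ci c1 c c2 hci hc1 hc hc2 hc21 hbi hb
    | zero => intro β hb; simpa using hb
    | add x y hx hy ihx ihy =>
      intro β hb
      have := ihy (β + x) (ihx β hb)
      rwa [add_assoc] at this
    | smul a x hx ihx =>
      intro β hb
      have ha : a = 0 ∨ a = 1 := by fin_cases a; exacts [Or.inl rfl, Or.inr rfl]
      rcases ha with rfl | rfl
      · rw [zero_smul]
        simpa using hb
      · rw [one_smul]
        exact ihx β hb
  have hsum : β₁ + (β₁ - β₂) = β₂ := by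
    funext x
    show β₁ x + (β₁ x - β₂ x) = β₂ x
    have h1 : β₁ x + β₁ x = 0 := CharTwo.add_self_eq_zero _
    have h2 : -(β₂ x) = β₂ x := CharTwo.neg_eq _
    calc β₁ x + (β₁ x - β₂ x) = (β₁ x + β₁ x) - β₂ x := by ring
      _ = β₂ x := by rw [h1]; rw [zero_sub, h2]
  have := key (β₁ - β₂) hβ β₁ h1
  rwa [hsum] at this
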